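/- Let G be a connected locally finite graph such that κ(x,y) ≥ k > 0 for every edge xy, where κ denotes the Lin-Lu-Yau curvature. Then diam(G) ≤ 2/k. -/

import Mathlib

open Finset SimpleGraph

variable {V : Type*} [Fintype V] [DecidableEq V]

/-- A graph is amply regular with parameters `(n, d, a, b)` if it is `d`-regular on `n`
vertices, adjacent vertices have exactly `a` common neighbors, and vertices at distance 2
have exactly `b` common neighbors. -/
def SimpleGraph.IsAmplyRegular (G : SimpleGraph V) [DecidableRel G.Adj]
    (n d a b : ℕ) : Prop :=
  Fintype.card V = n ∧ G.IsRegularOfDegree d ∧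
    (∀ x y, G.Adj x y → (G.neighborFinset x ∩ G.neighborFinset y).card = a) ∧
    (∀ x y, G.dist x y = 2 → (G.neighborFinset x ∩ G.neighborFinset y).card = b)

/-- The measure `μ_x^p` giving mass `p` to `x` and `(1-p)/deg x` to each neighbor of `x`. -/
noncomputable def muMeasure (G : SimpleGraph V) [DecidableRel G.Adj] (p : ℝ) (x : V) :
    V → ℝ :=
  fun v => if v = x then p else if G.Adj x v then (1 - p) / (G.degree x : ℝ) else 0

/-- `pi` is a transport plan between `mu1` and `mu2`. -/
def IsTransportPlan (mu1 mu2 : V → ℝ) (pi : V → V → ℝ) : Prop :=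
  (∀ u v, 0 ≤ pi u v) ∧ (∀ u, ∑ v, pi u v = mu1 u) ∧ (∀ v, ∑ u, pi u v = mu2 v)

/-- The 1-Wasserstein distance between two measures w.r.t. the graph distance. -/
noncomputable def W1 (G : SimpleGraph V) (mu1 mu2 : V → ℝ) : ℝ :=
  sInf {c : ℝ | ∃ pi, IsTransportPlan mu1 mu2 pi ∧
    c = ∑ u, ∑ v, (G.dist u v : ℝ) * pi u v}

/-- The Lin-Lu-Yau curvature of an edge of a `d`-regular graph, via the idleness
`p = 1/(d+1)` formula of Bourne et al. -/
noncomputable def kappaLLY (G : SimpleGraph V) [DecidableRel G.Adj] (d : ℕ) (x y : V) :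
    ℝ :=
  ((d + 1 : ℝ) / d) *
    (1 - W1 G (muMeasure G (1 / (d + 1 : ℝ)) x) (muMeasure G (1 / (d + 1 : ℝ)) y))

/-- `N_x = Γ(x) \ ({y} ∪ Γ(y))`. -/
def Nset (G : SimpleGraph V) [DecidableRel G.Adj] (x y : V) : Finset V :=
  G.neighborFinset x \ insert y (G.neighborFinset y)

/-- `Δ_{xy} = Γ(x) ∩ Γ(y)`. -/
def Dset (G : SimpleGraph V) [DecidableRel G.Adj] (x y : V) : Finset V :=
  G.neighborFinset x ∩ G.neighborFinset y

/-- `κ_p(x,y) = 1 - W₁(μ_x^p, μ_y^p)/d(x,y)`. -/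
noncomputable def kappaP (G : SimpleGraph V) [DecidableRel G.Adj] (p : ℝ) (x y : V) :
    ℝ :=
  1 - W1 G (muMeasure G p x) (muMeasure G p y) / (G.dist x y : ℝ)

set_option linter.unusedSectionVars false

section Aux
variable (G : SimpleGraph V) [DecidableRel G.Adj]

lemma mu_nonneg {p : ℝ} (hp0 : 0 ≤ p) (hp1 : p ≤ 1) (x v : V) : 0 ≤ muMeasure G p x v := by
  unfold muMeasure
  split_ifs
  · exact hp0
  · apply div_nonneg (by linarith) (Nat.cast_nonneg _)
  · exact le_refl 0

lemma sum_mul_mu (p : ℝ) (x : V) (f : V → ℝ) :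
    ∑ v, f v * muMeasure G p x v
      = f x * p + (∑ v ∈ G.neighborFinset x, f v) * ((1 - p) / (G.degree x : ℝ)) := by
  unfold muMeasure
  have key : ∀ v : V, f v * (if v = x then p else if G.Adj x v then (1 - p) / (G.degree x : ℝ) else 0)
      = (if v = x then f v * p else 0)
        + (if G.Adj x v then f v * ((1 - p) / (G.degree x : ℝ)) else 0) := by
    intro v
    by_cases hvx : v = x
    · subst hvx; simp [G.irrefl]
    · simp only [hvx, if_false]
      split_ifs <;> ring
  rw [Finset.sum_congr rfl fun v _ => key v, Finset.sum_add_distrib]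
  congr 1
  · simp
  · rw [← Finset.sum_filter, ← Finset.sum_mul]
    congr 1
    · congr 1
      ext v
      simp [SimpleGraph.mem_neighborFinset]

lemma sum_mu {p : ℝ} (x : V) (hdx : 0 < G.degree x) : ∑ v, muMeasure G p x v = 1 := by
  have := sum_mul_mu G p x (fun _ => 1)
  simp only [one_mul] at this
  rw [this, Finset.sum_const, SimpleGraph.card_neighborFinset_eq_degree]
  have hD : (G.degree x : ℝ) ≠ 0 := by positivity
  field_simp
  simp only [nsmul_eq_mul, mul_one]
  ring

lemma exists_plan {p : ℝ} (hp0 : 0 ≤ p) (hp1 : p ≤ 1) {x y : V}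
    (hdx : 0 < G.degree x) (hdy : 0 < G.degree y) :
    ∃ pi, IsTransportPlan (muMeasure G p x) (muMeasure G p y) pi := by
  refine ⟨fun u v => muMeasure G p x u * muMeasure G p y v, fun u v =>
    mul_nonneg (mu_nonneg G hp0 hp1 x u) (mu_nonneg G hp0 hp1 y v), fun u => ?_, fun v => ?_⟩
  · rw [← Finset.mul_sum, sum_mu G y hdy, mul_one]
  · rw [← Finset.sum_mul, sum_mu G x hdx, one_mul]

lemma le_W1 (mu1 mu2 : V → ℝ) (hplan : ∃ pi, IsTransportPlan mu1 mu2 pi)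
    (f : V → ℝ) (hf : ∀ u v, f u - f v ≤ (G.dist u v : ℝ)) :
    (∑ v, f v * mu1 v) - (∑ v, f v * mu2 v) ≤ W1 G mu1 mu2 := by
  apply le_csInf
  · obtain ⟨pi, hpi⟩ := hplan
    exact ⟨_, pi, hpi, rfl⟩
  · rintro c ⟨pi, ⟨hpos, hm1, hm2⟩, rfl⟩
    have h1 : ∑ v, f v * mu1 v = ∑ u, ∑ v, f u * pi u v := by
      simp only [← Finset.mul_sum, hm1]
    have h2 : ∑ v, f v * mu2 v = ∑ u, ∑ v, f v * pi u v := by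
      rw [Finset.sum_comm]
      simp only [← Finset.mul_sum]
      exact Finset.sum_congr rfl fun v _ => by rw [hm2]
    rw [h1, h2, ← Finset.sum_sub_distrib]
    apply Finset.sum_le_sum
    intro u _
    rw [← Finset.sum_sub_distrib]
    apply Finset.sum_le_sum
    intro v _
    rw [← sub_mul]
    exact mul_le_mul_of_nonneg_right (hf u v) (hpos u v)

lemma walk_bound (F : V → ℝ) (B : ℝ) (hB : ∀ a b, G.Adj a b → F a - F b ≤ B) :
    ∀ {x y : V} (w : G.Walk x y), F x - F y ≤ w.length * B := by
  intro x y w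
  induction w with
  | nil => simp
  | @cons a b c hadj w ih =>
    have := hB a b hadj
    simp only [SimpleGraph.Walk.length_cons]
    push_cast
    linarith

end Aux

/-- Discrete Bonnet-Myers: if the Lin-Lu-Yau curvature
`κ(x,y) = lim_{p→1} κ_p(x,y)/(1-p)` of every edge is at least `k > 0`, then
`diam(G) ≤ 2/k`. -/
theorem stmt12 (G : SimpleGraph V) [DecidableRel G.Adj] (hconn : G.Connected)
    (k : ℝ) (hk : 0 < k)
    (h : ∀ x y, G.Adj x y → ∃ c : ℝ, k ≤ c ∧
      Filter.Tendsto (fun p => kappaP G p x y / (1 - p))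
        (nhdsWithin 1 (Set.Iio 1)) (nhds c)) :
    (G.diam : ℝ) ≤ 2 / k := by
  have hne : Nonempty V := hconn.nonempty
  have key : ∀ x y : V, (G.dist x y : ℝ) * k ≤ 2 := by
    intro x y
    rcases eq_or_ne x y with rfl | hxy
    · rw [SimpleGraph.dist_self]; norm_num
    -- setup
    obtain ⟨w, hw⟩ := (hconn x y).exists_walk_length_eq_dist
    set d : ℕ := G.dist x y with hd
    have hd1 : 1 ≤ d := by
      rcases Nat.eq_zero_or_pos d with h0 | h1
      · exact absurd ((SimpleGraph.dist_eq_zero_iff_eq_or_not_reachable).mp h0)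
          (by simp [hxy, hconn x y])
      · exact h1
    have hdR : (1 : ℝ) ≤ (d : ℝ) := by exact_mod_cast hd1
    have hadjx : ∃ z, G.Adj x z := by
      cases w with
      | nil => exact absurd rfl hxy
      | cons hadj _ => exact ⟨_, hadj⟩
    have hadjy : ∃ z, G.Adj y z := by
      cases hw' : w.reverse with
      | nil => exact absurd rfl hxy.symm
      | cons hadj _ => exact ⟨_, hadj⟩
    -- epsilon argument
    by_contra hcon
    push_neg at hcon
    set ε : ℝ := ((d : ℝ) * k - 2) / (2 * (d : ℝ)) with hε
    have hεpos : 0 < ε := by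
      apply div_pos (by linarith) (by linarith)
    -- eventual bounds
    have hev1 : ∀ᶠ p in nhdsWithin (1:ℝ) (Set.Iio 1), p < 1 :=
      eventually_mem_nhdsWithin
    have hev0 : ∀ᶠ p in nhdsWithin (1:ℝ) (Set.Iio 1), (0:ℝ) < p :=
      (eventually_gt_nhds (by norm_num : (0:ℝ) < 1)).filter_mono nhdsWithin_le_nhds
    have hev2 : ∀ᶠ p in nhdsWithin (1:ℝ) (Set.Iio 1),
        ∀ a b : V, G.Adj a b → k - ε < kappaP G p a b / (1 - p) := by
      rw [Filter.eventually_all]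
      intro a
      rw [Filter.eventually_all]
      intro b
      by_cases hab : G.Adj a b
      · obtain ⟨c, hkc, ht⟩ := h a b hab
        have hlt : k - ε < c := by linarith
        filter_upwards [ht.eventually (eventually_gt_nhds hlt)] with p hp _
        exact hp
      · filter_upwards with p hab' ; exact absurd hab' hab
    obtain ⟨p, hp1, hp0, hedge⟩ := (hev1.and (hev0.and hev2)).exists
    have hq : (0:ℝ) < 1 - p := by linarith
    -- per-edge W1 bound
    have hW1edge : ∀ a b : V, G.Adj a b →
        W1 G (muMeasure G p a) (muMeasure G p b) ≤ 1 - (k - ε) * (1 - p) := by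
      intro a b hab
      have hdab : G.dist a b = 1 := SimpleGraph.dist_eq_one_iff_adj.mpr hab
      have := hedge a b hab
      rw [kappaP, hdab] at this
      rw [lt_div_iff₀ hq] at this
      push_cast at this
      rw [div_one] at this
      linarith
    -- the potential function
    set f : V → ℝ := fun v => (G.dist v y : ℝ) with hf
    set F : V → ℝ := fun z => ∑ v, f v * muMeasure G p z v with hF
    have hfLip : ∀ u v : V, f u - f v ≤ (G.dist u v : ℝ) := by
      intro u v
      have := hconn.dist_triangle (u := u) (v := v) (w := y)
      have := (Nat.cast_le (α := ℝ)).mpr this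
      push_cast at this
      simp only [hf]
      linarith
    have hFedge : ∀ a b : V, G.Adj a b → F a - F b ≤ 1 - (k - ε) * (1 - p) := by
      intro a b hab
      refine le_trans (le_W1 G _ _ ?_ f hfLip) (hW1edge a b hab)
      exact exists_plan G (le_of_lt hp0) (le_of_lt (by linarith)) 
        ((G.degree_pos_iff_exists_adj a).mpr ⟨b, hab⟩)
        ((G.degree_pos_iff_exists_adj b).mpr ⟨a, hab.symm⟩)
    have htel : F x - F y ≤ (d : ℝ) * (1 - (k - ε) * (1 - p)) := by
      have := walk_bound G F _ hFedge w
      rwa [hw] at this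
    -- compute F y
    have hdy : 0 < G.degree y := (G.degree_pos_iff_exists_adj y).mpr hadjy
    have hdyR : (0:ℝ) < (G.degree y : ℝ) := by exact_mod_cast hdy
    have hFy : F y = 1 - p := by
      simp only [hF]
      rw [sum_mul_mu]
      have h1 : f y = 0 := by simp [hf]
      have h2 : ∑ v ∈ G.neighborFinset y, f v = (G.degree y : ℝ) := by
        rw [Finset.sum_congr rfl (fun v hv => ?_), Finset.sum_const,
          SimpleGraph.card_neighborFinset_eq_degree, nsmul_eq_mul, mul_one]
        rw [SimpleGraph.mem_neighborFinset] at hv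
        simp only [hf]
        rw [SimpleGraph.dist_comm, SimpleGraph.dist_eq_one_iff_adj.mpr hv]
        norm_num
      rw [h1, h2]
      field_simp
      ring
    -- lower bound on F x
    have hdx : 0 < G.degree x := (G.degree_pos_iff_exists_adj x).mpr hadjx
    have hdxR : (0:ℝ) < (G.degree x : ℝ) := by exact_mod_cast hdx
    have hFx : (d : ℝ) - (1 - p) ≤ F x := by
      simp only [hF]
      rw [sum_mul_mu]
      have h1 : f x = (d : ℝ) := by simp [hf, hd]
      have h2 : (G.degree x : ℝ) * ((d:ℝ) - 1) ≤ ∑ v ∈ G.neighborFinset x, f v := by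
        have hbd : ∀ v ∈ G.neighborFinset x, (d:ℝ) - 1 ≤ f v := by
          intro v hv
          rw [SimpleGraph.mem_neighborFinset] at hv
          have htri := hconn.dist_triangle (u := x) (v := v) (w := y)
          rw [SimpleGraph.dist_eq_one_iff_adj.mpr hv, ← hd] at htri
          have hc := (Nat.cast_le (α := ℝ)).mpr htri
          push_cast at hc
          simp only [hf]
          linarith
        calc (G.degree x:ℝ) * ((d:ℝ)-1) = ∑ _v ∈ G.neighborFinset x, ((d:ℝ)-1) := by
              rw [Finset.sum_const, SimpleGraph.card_neighborFinset_eq_degree, nsmul_eq_mul]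
          _ ≤ _ := Finset.sum_le_sum hbd
      rw [h1]
      have h3 : (G.degree x:ℝ) * ((d:ℝ)-1) * ((1-p)/(G.degree x:ℝ)) = ((d:ℝ)-1)*(1-p) := by
        field_simp
      have h4 := mul_le_mul_of_nonneg_right h2 (div_nonneg hq.le hdxR.le)
      rw [h3] at h4
      nlinarith [h4]
    -- combine
    have hfinal : (d : ℝ) * (k - ε) * (1 - p) ≤ 2 * (1 - p) := by nlinarith
    have h2d : (d : ℝ) * (k - ε) ≤ 2 := by
      have := (mul_le_mul_iff_of_pos_right hq).mp (by linarith : (d:ℝ) * (k - ε) * (1-p) ≤ 2 * (1-p))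
      linarith
    have hd0 : (d:ℝ) ≠ 0 := by linarith
    have hde : (d:ℝ) * ε = ((d:ℝ)*k - 2)/2 := by
      rw [hε]; field_simp
    rw [mul_sub, hde] at h2d
    linarith
  obtain ⟨u, v, huv⟩ := SimpleGraph.exists_dist_eq_diam (G := G)
  rw [← huv, le_div_iff₀ hk]
  exact key u v
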